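/- Let 0 ≤ b < a with a ≠ 1 and d > 0. For every natural number n and every i with 0 ≤ i < d^n, the value f_{a,b,d}^n(i) has a base-(ad) representation of length exactly μ_{a,b,d,n}(i); equivalently, f_{a,b,d}^n(i) < (a·d)^{μ_{a,b,d,n}(i)}, where μ_{a,b,d,n}(i) counts the indices 0 ≤ k < n with d ∤ f_{a,b,d}^k(i). -/

import Mathlib

/-- `f a b d m = m / d` if `d ∣ m`, else `a * m + b`. -/
def fabd (a b d : ℕ) : ℕ → ℕ := fun m => if d ∣ m then m / d else a * m + b

/-- `μ a b d n q` counts indices `k < n` with `d ∤ f^[k] q`. -/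
def muabd (a b d n q : ℕ) : ℕ :=
  ((Finset.range n).filter (fun k => ¬ d ∣ (fabd a b d)^[k] q)).card

lemma muabd_succ (a b d n i : ℕ) :
    muabd a b d (n+1) i = muabd a b d n (fabd a b d i) + (if d ∣ i then 0 else 1) := by
  unfold muabd
  rw [Finset.card_filter, Finset.card_filter, Finset.sum_range_succ']
  simp [Function.iterate_succ_apply]
  congr 1
  · exact Finset.sum_congr rfl (fun k _ => by split_ifs <;> simp_all)
  · split_ifs <;> simp_all

lemma iterate_fabd_aux (a b d : ℕ) (hb : b < a) (hd : 0 < d) :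
    ∀ n c i, i < (a*d)^c * d^n → (fabd a b d)^[n] i < (a*d)^(c + muabd a b d n i) := by
  intro n
  induction n with
  | zero => intro c i hi; simpa [muabd] using hi
  | succ n ih =>
    intro c i hi
    rw [Function.iterate_succ_apply, muabd_succ]
    by_cases h : d ∣ i
    · simp only [h, if_true, add_zero]
      have h1 : fabd a b d i = i / d := by simp [fabd, h]
      rw [h1]
      apply ih
      have h2 : i / d * d < (a*d)^c * d^n * d := by
        rw [Nat.div_mul_cancel h, mul_assoc, ← pow_succ]; exact hi
      exact lt_of_mul_lt_mul_right h2 (Nat.zero_le d)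
    · simp only [h, if_false]
      have h1 : fabd a b d i = a * i + b := by simp [fabd, h]
      rw [h1]
      rw [show c + (muabd a b d n (a*i+b) + 1) = (c+1) + muabd a b d n (a*i+b) by ring]
      apply ih
      calc a * i + b < a * (i + 1) := by nlinarith
        _ ≤ a * ((a*d)^c * d^(n+1)) := Nat.mul_le_mul_left a hi
        _ = (a*d)^(c+1) * d^n := by ring
  
theorem iterate_fabd_lt (a b d : ℕ) (hb : b < a) (ha : a ≠ 1) (hd : 0 < d)
    (n i : ℕ) (hi : i < d ^ n) :
    (fabd a b d)^[n] i < (a * d) ^ (muabd a b d n i) := by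
  have := iterate_fabd_aux a b d hb hd n 0 i (by simpa using hi)
  simpa using this
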